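/- arXiv:cs/0408055 — 4 statements merged into one kernel-verified Lean document; each statement's English description precedes it below -/
import Mathlib

section
/- For proportionate selection, the selection strength with respect to an NFD φ whose support consists of positive reals equals the mean absolute deviation of φ divided by its mean: d(φ, Γ_prop φ) = (Σ_{x ∈ E_φ} φ(x) |μ_φ − x|) / μ_φ, where μ_φ = Σ_{x ∈ E_φ} x φ(x). -/
structure IsNFD (φ : ℝ → ℝ) : Prop where
  mem_Icc : ∀ x, φ x ∈ Set.Icc (0 : ℝ) 1
  finite_support : (Function.support φ).Finite
  sum_eq_one : ∑ᶠ x, φ x = 1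

noncomputable def nfdDist (φ₁ φ₂ : ℝ → ℝ) : ℝ :=
  ∑ᶠ x, |φ₁ x - φ₂ x|

noncomputable def propSelection (φ : ℝ → ℝ) : ℝ → ℝ :=
  fun x => x * φ x / ∑ᶠ y, y * φ y

/-- For proportionate selection, the selection strength with respect to an NFD `φ`
with positive support equals the mean absolute deviation divided by the mean:
`d(φ, Γ_prop φ) = (Σ_{x ∈ E_φ} φ(x) |μ_φ − x|) / μ_φ` where `μ_φ = Σ_{x ∈ E_φ} x φ(x)`. -/
theorem nfdDist_propSelection (φ : ℝ → ℝ) (hφ : IsNFD φ)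
    (hpos : Function.support φ ⊆ Set.Ioi (0 : ℝ)) :
    nfdDist φ (propSelection φ) =
      (∑ᶠ x, φ x * |(∑ᶠ y, y * φ y) - x|) / (∑ᶠ y, y * φ y) := by
  set μ := ∑ᶠ y, y * φ y with hμ
  have hsub : Function.support (fun y => y * φ y) ⊆ Function.support φ := by
    intro y hy; simp only [Function.mem_support] at hy ⊢
    intro h; apply hy; simp [h]
  have hfin : (Function.support (fun y => y * φ y)).Finite :=
    hφ.finite_support.subset hsub
  have hne : (Function.support φ).Nonempty := by
    by_contra h
    rw [Set.not_nonempty_iff_eq_empty, Function.support_eq_empty_iff] at h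
    have := hφ.sum_eq_one
    rw [h] at this
    simp at this
  have hμpos : 0 < μ := by
    obtain ⟨a, ha⟩ := hne
    have haφ : 0 < φ a := lt_of_le_of_ne (hφ.mem_Icc a).1 (Ne.symm ha)
    have hapos : 0 < a := hpos ha
    rw [hμ, finsum_eq_sum _ hfin]
    refine Finset.sum_pos' (fun y hy => ?_) ⟨a, ?_, mul_pos hapos haφ⟩
    · rcases eq_or_ne (φ y) 0 with h | h
      · simp [h]
      · exact le_of_lt (mul_pos (hpos h) (lt_of_le_of_ne (hφ.mem_Icc y).1 (Ne.symm h)))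
    · simp only [Set.Finite.mem_toFinset, Function.mem_support]
      exact mul_ne_zero (ne_of_gt hapos) ha
  have hpt : ∀ x, |φ x - propSelection φ x| = φ x * |μ - x| / μ := by
    intro x
    have : φ x - propSelection φ x = φ x * (μ - x) / μ := by
      simp only [propSelection, ← hμ]
      field_simp
    rw [this, abs_div, abs_mul, abs_of_nonneg (hφ.mem_Icc x).1, abs_of_pos hμpos]
  calc nfdDist φ (propSelection φ) = ∑ᶠ x, φ x * |μ - x| / μ := finsum_congr hpt
    _ = (∑ᶠ x, φ x * |μ - x|) / μ := by
        have h : (Function.support fun x => φ x * |μ - x|).Finite := by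
          refine hφ.finite_support.subset fun x hx => ?_
          simp only [Function.mem_support] at hx ⊢
          intro hc; apply hx; simp [hc]
        rw [div_eq_mul_inv, finsum_mul _ _]
        simp [div_eq_mul_inv]
end

section
/- For any NFD φ with E_φ ⊂ [0,∞), any sequence {g_k} of nonnegative reals, and any n > m with n, m ∈ ℤ⁺, the Boltzmann selection schedule {Γ_(n)} satisfies d(Γ_(n)φ, Γ_(m)φ) ≤ Σ_{x ∈ E_φ} ( exp(x Σ_{k=m+1}^n g_k) − 1 ). -/
/-- The Boltzmann selection schedule associated to a sequence `{g_k}`: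
`(Γ_(n) φ)(x) = φ(x) exp(x Σ_{k=1}^n g_k) / Σ_{y ∈ E_φ} φ(y) exp(y Σ_{k=1}^n g_k)`. -/
noncomputable def boltzmannSchedule (g : ℕ → ℝ) (n : ℕ) (φ : ℝ → ℝ) : ℝ → ℝ :=
  fun x => φ x * Real.exp (x * ∑ k ∈ Finset.Icc 1 n, g k) /
    ∑ᶠ y, φ y * Real.exp (y * ∑ k ∈ Finset.Icc 1 n, g k)

lemma double_sum_abs_le (F : Finset ℝ) (p a : ℝ → ℝ)
    (hp : ∀ x ∈ F, 0 ≤ p x) (ha : ∀ x ∈ F, 0 ≤ a x) :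
    ∑ x ∈ F, p x * ∑ y ∈ F, p y * |a x - a y| ≤
      2 * ∑ x ∈ F, p x * ((∑ y ∈ F, p y) - p x) * a x := by
  set P := ∑ y ∈ F, p y with hP
  set S := ∑ y ∈ F, p y * a y with hS
  have key : ∀ x ∈ F, ∑ y ∈ F, p y * |a x - a y| ≤
      P * a x + S - 2 * (p x * a x) := by
    intro x hx
    have h1 : ∑ y ∈ F, p y * |a x - a y| ≤
        ∑ y ∈ F, (p y * (a x + a y) - 2 * (p y * min (a x) (a y))) := by
      refine Finset.sum_le_sum fun y hy => ?_
      have habs : |a x - a y| = a x + a y - 2 * min (a x) (a y) := by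
        rcases le_total (a x) (a y) with h | h
        · rw [abs_of_nonpos (by linarith), min_eq_left h]; ring
        · rw [abs_of_nonneg (by linarith), min_eq_right h]; ring
      rw [habs]; ring_nf; rfl
    have h2 : ∑ y ∈ F, (p y * (a x + a y) - 2 * (p y * min (a x) (a y)))
        = P * a x + S - 2 * ∑ y ∈ F, p y * min (a x) (a y) := by
      rw [Finset.sum_sub_distrib, ← Finset.mul_sum]
      congr 1
      · rw [hP, hS, Finset.sum_mul]
        rw [← Finset.sum_add_distrib]
        exact Finset.sum_congr rfl fun y _ => by ring
    have h3 : p x * a x ≤ ∑ y ∈ F, p y * min (a x) (a y) := by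
      have := Finset.single_le_sum (f := fun y => p y * min (a x) (a y))
        (fun y hy => mul_nonneg (hp y hy) (le_min (ha x hx) (ha y hy))) hx
      simpa [min_self] using this
    calc ∑ y ∈ F, p y * |a x - a y| ≤ _ := h1
      _ = _ := h2
      _ ≤ P * a x + S - 2 * (p x * a x) := by linarith
  have step1 : ∑ x ∈ F, p x * ∑ y ∈ F, p y * |a x - a y| ≤
      ∑ x ∈ F, p x * (P * a x + S - 2 * (p x * a x)) :=
    Finset.sum_le_sum fun x hx => mul_le_mul_of_nonneg_left (key x hx) (hp x hx)
  have step2 : ∑ x ∈ F, p x * (P * a x + S - 2 * (p x * a x))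
      = 2 * ∑ x ∈ F, p x * (P - p x) * a x := by
    have hz : ∑ x ∈ F, (p x * (P * a x + S - 2 * (p x * a x))
        - 2 * (p x * (P - p x) * a x)) = 0 := by
      have : ∀ x ∈ F, p x * (P * a x + S - 2 * (p x * a x))
          - 2 * (p x * (P - p x) * a x) = S * p x - P * (p x * a x) :=
        fun x _ => by ring
      rw [Finset.sum_congr rfl this, Finset.sum_sub_distrib,
        ← Finset.mul_sum, ← Finset.mul_sum, ← hP, ← hS]
      ring
    rw [Finset.sum_sub_distrib, ← Finset.mul_sum] at hz
    linarith
  linarith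

/-- For `n > m` (both positive integers),
`d(Γ_(n)φ, Γ_(m)φ) ≤ Σ_{x ∈ E_φ} ( exp(x Σ_{k=m+1}^n g_k) − 1 )`. -/
theorem nfdDist_boltzmannSchedule_le_sum_exp (g : ℕ → ℝ) (hg : ∀ k, 0 ≤ g k)
    (φ : ℝ → ℝ) (hφ : IsNFD φ) (hnn : Function.support φ ⊆ Set.Ici (0 : ℝ))
    (n m : ℕ) (hm : 0 < m) (hmn : m < n) :
    nfdDist (boltzmannSchedule g n φ) (boltzmannSchedule g m φ) ≤
      ∑ x ∈ hφ.finite_support.toFinset,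
        (Real.exp (x * ∑ k ∈ Finset.Icc (m + 1) n, g k) - 1) := by
  classical
  set F := hφ.finite_support.toFinset with hF
  have hmemF : ∀ x : ℝ, x ∈ F ↔ φ x ≠ 0 := fun x => by
    simp [hF, Set.Finite.mem_toFinset, Function.mem_support]
  set Am := ∑ k ∈ Finset.Icc 1 m, g k with hAm
  set An := ∑ k ∈ Finset.Icc 1 n, g k with hAn
  set B := ∑ k ∈ Finset.Icc (m + 1) n, g k with hB
  have hIcc : ∀ k : ℕ, Finset.Icc 1 k = Finset.Ioc 0 k := fun k => Finset.Icc_add_one_left_eq_Ioc 0 k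
  have hAnm : An = Am + B := by
    rw [hAn, hAm, hB, hIcc n, hIcc m,
      show Finset.Icc (m + 1) n = Finset.Ioc m n from Finset.Icc_add_one_left_eq_Ioc m n]
    exact (Finset.sum_Ioc_consecutive g (Nat.zero_le m) hmn.le).symm
  have hAm0 : 0 ≤ Am := Finset.sum_nonneg fun k _ => hg k
  have hB0 : 0 ≤ B := Finset.sum_nonneg fun k _ => hg k
  have hφ0 : ∀ x, 0 ≤ φ x := fun x => (hφ.mem_Icc x).1
  have hx0 : ∀ x ∈ F, (0:ℝ) ≤ x := fun x hx => hnn ((hmemF x).1 hx)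
  set p : ℝ → ℝ := fun x => φ x * Real.exp (x * Am) with hpdef
  set T : ℝ → ℝ := fun x => Real.exp (x * B) with hTdef
  set a : ℝ → ℝ := fun x => T x - 1 with hadef
  have hp0 : ∀ x, 0 ≤ p x := fun x => mul_nonneg (hφ0 x) (Real.exp_pos _).le
  have hT1 : ∀ x ∈ F, 1 ≤ T x := fun x hx =>
    Real.one_le_exp (mul_nonneg (hx0 x hx) hB0)
  have ha0 : ∀ x ∈ F, 0 ≤ a x := fun x hx => by
    simp only [hadef]; linarith [hT1 x hx]
  have he1 : ∀ x ∈ F, 1 ≤ Real.exp (x * Am) := fun x hx =>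
    Real.one_le_exp (mul_nonneg (hx0 x hx) hAm0)
  set P := ∑ x ∈ F, p x with hPdef
  set Q := ∑ x ∈ F, p x * T x with hQdef
  have hPfin : (∑ᶠ y, φ y * Real.exp (y * Am)) = P := by
    refine finsum_eq_sum_of_support_subset _ fun y hy => ?_
    have : φ y ≠ 0 := fun h0 => by simp [h0] at hy
    exact Finset.mem_coe.2 ((hmemF y).2 this)
  have hQfin : (∑ᶠ y, φ y * Real.exp (y * An)) = Q := by
    have h1 : (∑ᶠ y, φ y * Real.exp (y * An)) = ∑ y ∈ F, φ y * Real.exp (y * An) := by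
      refine finsum_eq_sum_of_support_subset _ fun y hy => ?_
      have : φ y ≠ 0 := fun h0 => by simp [h0] at hy
      exact Finset.mem_coe.2 ((hmemF y).2 this)
    rw [h1, hQdef]
    refine Finset.sum_congr rfl fun y _ => ?_
    simp only [hpdef, hTdef, hAnm, mul_add, Real.exp_add]
    ring
  have hsum1 : ∑ x ∈ F, φ x = 1 := by
    rw [← hφ.sum_eq_one]
    exact (finsum_eq_sum_of_support_subset _ fun y hy =>
      Finset.mem_coe.2 ((hmemF y).2 hy)).symm
  have hP1 : 1 ≤ P := by
    rw [← hsum1, hPdef]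
    exact Finset.sum_le_sum fun x hx => le_mul_of_one_le_right (hφ0 x) (he1 x hx)
  have hPQ : P ≤ Q := by
    refine Finset.sum_le_sum fun x hx => ?_
    exact le_mul_of_one_le_right (hp0 x) (hT1 x hx)
  have hP0 : (0:ℝ) < P := by linarith
  have hQ0 : (0:ℝ) < Q := by linarith
  have hdist : nfdDist (boltzmannSchedule g n φ) (boltzmannSchedule g m φ)
      = ∑ x ∈ F, |p x * T x / Q - p x / P| := by
    rw [nfdDist]
    have hsupp : Function.support
        (fun x => |boltzmannSchedule g n φ x - boltzmannSchedule g m φ x|) ⊆ ↑F := by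
      intro x hx
      have : φ x ≠ 0 := by
        intro h0
        apply hx
        simp [boltzmannSchedule, h0]
      exact Finset.mem_coe.2 ((hmemF x).2 this)
    rw [finsum_eq_sum_of_support_subset _ hsupp]
    refine Finset.sum_congr rfl fun x _ => ?_
    congr 1
    rw [boltzmannSchedule, boltzmannSchedule, ← hAn, ← hAm, hPfin, hQfin]
    congr 1
    simp only [hpdef, hTdef, hAnm, mul_add, Real.exp_add]
    ring
  rw [hdist]
  have hpoint : ∀ x ∈ F, |p x * T x / Q - p x / P| ≤
      p x * (∑ y ∈ F, p y * |a x - a y|) / (P * Q) := by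
    intro x hx
    have hrw : p x * T x / Q - p x / P = p x * (T x * P - Q) / (P * Q) := by
      field_simp
    rw [hrw, abs_div, abs_of_pos (by positivity : (0:ℝ) < P * Q), abs_mul,
      abs_of_nonneg (hp0 x)]
    have habs : |T x * P - Q| ≤ ∑ y ∈ F, p y * |a x - a y| := by
      have hTPQ : T x * P - Q = ∑ y ∈ F, p y * (T x - T y) := by
        have h1 : ∀ y ∈ F, p y * (T x - T y) = T x * p y - p y * T y :=
          fun y _ => by ring
        rw [Finset.sum_congr rfl h1, Finset.sum_sub_distrib, ← Finset.mul_sum,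
          ← hPdef, ← hQdef]
      calc |T x * P - Q| = |∑ y ∈ F, p y * (T x - T y)| := by rw [hTPQ]
        _ ≤ ∑ y ∈ F, |p y * (T x - T y)| := Finset.abs_sum_le_sum_abs _ _
        _ = ∑ y ∈ F, p y * |a x - a y| := by
            refine Finset.sum_congr rfl fun y _ => ?_
            rw [abs_mul, abs_of_nonneg (hp0 y)]
            congr 1
            congr 1
            simp only [hadef]
            ring
    gcongr
    exact hp0 x
  calc ∑ x ∈ F, |p x * T x / Q - p x / P|
      ≤ ∑ x ∈ F, p x * (∑ y ∈ F, p y * |a x - a y|) / (P * Q) :=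
        Finset.sum_le_sum hpoint
    _ = (∑ x ∈ F, p x * ∑ y ∈ F, p y * |a x - a y|) / (P * Q) := by
        rw [← Finset.sum_div]
    _ ≤ (2 * ∑ x ∈ F, p x * ((∑ y ∈ F, p y) - p x) * a x) / (P * Q) := by
        have hds := double_sum_abs_le F p a (fun x _ => hp0 x) ha0
        exact (div_le_div_iff_of_pos_right (by positivity : (0:ℝ) < P * Q)).2 hds
    _ ≤ ∑ x ∈ F, a x := by
        have hb : ∀ x ∈ F, p x * ((∑ y ∈ F, p y) - p x) * a x ≤ (P * Q / 4) * a x := by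
          intro x hx
          have hPP : P * P ≤ P * Q := mul_le_mul_of_nonneg_left hPQ hP0.le
          have h1 : p x * (P - p x) ≤ P * Q / 4 := by
            nlinarith [sq_nonneg (2 * p x - P)]
          calc p x * ((∑ y ∈ F, p y) - p x) * a x = p x * (P - p x) * a x := by
                rw [← hPdef]
            _ ≤ (P * Q / 4) * a x := mul_le_mul_of_nonneg_right h1 (ha0 x hx)
        have hSa0 : 0 ≤ ∑ x ∈ F, a x := Finset.sum_nonneg ha0
        have h2 : ∑ x ∈ F, p x * ((∑ y ∈ F, p y) - p x) * a x
            ≤ (P * Q / 4) * (∑ x ∈ F, a x) := by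
          rw [Finset.mul_sum]; exact Finset.sum_le_sum hb
        rw [div_le_iff₀ (by positivity : (0:ℝ) < P * Q)]
        nlinarith [mul_nonneg (mul_nonneg hP0.le hQ0.le) hSa0]
    _ = ∑ x ∈ hφ.finite_support.toFinset,
        (Real.exp (x * ∑ k ∈ Finset.Icc (m + 1) n, g k) - 1) := by
        rw [← hF, ← hB]
        try exact Finset.sum_congr rfl fun x _ => by simp [hadef, hTdef]
end

section
/- Let {g_k} be any sequence of nonnegative reals and let {Γ_(n)} be the corresponding Boltzmann selection schedule. If the sequence of partial sums {Σ_{k=1}^n g_k}_n is a Cauchy sequence in ℝ, then for every NFD φ with E_φ ⊂ [0,∞), the sequence {Γ_(n)φ}_n is a Cauchy sequence with respect to the metric d. -/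
/-- If the partial sums `Σ_{k=1}^n g_k` form a Cauchy sequence, then for every
NFD `φ` the sequence `{Γ_(n)φ}` is Cauchy with respect to the metric `d`. -/
theorem boltzmannSchedule_cauchy (g : ℕ → ℝ) (hg : ∀ k, 0 ≤ g k)
    (hCauchy : ∀ ε > (0 : ℝ), ∃ N : ℕ, ∀ n m : ℕ, N ≤ n → N ≤ m →
      |(∑ k ∈ Finset.Icc 1 n, g k) - (∑ k ∈ Finset.Icc 1 m, g k)| < ε)
    (φ : ℝ → ℝ) (hφ : IsNFD φ) (hnn : Function.support φ ⊆ Set.Ici (0 : ℝ)) :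
    ∀ ε > (0 : ℝ), ∃ N : ℕ, ∀ n m : ℕ, N ≤ n → N ≤ m →
      nfdDist (boltzmannSchedule g n φ) (boltzmannSchedule g m φ) < ε := by
  classical
  intro ε hε
  set u : ℕ → ℝ := fun n => ∑ k ∈ Finset.Icc 1 n, g k with hu
  set S : Finset ℝ := hφ.finite_support.toFinset with hS
  set Z : ℝ → ℝ := fun t => ∑ x ∈ S, φ x * Real.exp (x * t) with hZ
  have hφ0 : ∀ x, 0 ≤ φ x := fun x => (hφ.mem_Icc x).1
  have hmem : ∀ x, φ x ≠ 0 → x ∈ S := fun x hx =>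
    hφ.finite_support.mem_toFinset.mpr hx
  have hSne : ∃ x ∈ S, φ x ≠ 0 := by
    by_contra h
    push_neg at h
    have hz : ∀ x, φ x = 0 := by
      intro x
      by_contra hx
      exact hx (h x (hmem x hx))
    have h1 := hφ.sum_eq_one
    rw [show φ = fun _ => (0:ℝ) from funext hz] at h1
    simp at h1
  have hZpos : ∀ t, 0 < Z t := by
    intro t
    obtain ⟨x₀, hx₀S, hx₀⟩ := hSne
    refine Finset.sum_pos' (fun x _ => mul_nonneg (hφ0 x) (Real.exp_pos _).le)
      ⟨x₀, hx₀S, mul_pos (lt_of_le_of_ne (hφ0 x₀) (Ne.symm hx₀)) (Real.exp_pos _)⟩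
  set F : ℝ → ℝ → ℝ := fun t x => φ x * Real.exp (x * t) / Z t with hF
  have hfinsumZ : ∀ t, (∑ᶠ y, φ y * Real.exp (y * t)) = Z t := by
    intro t
    apply finsum_eq_finset_sum_of_support_subset
    intro x hx
    simp only [Function.mem_support] at hx
    have hxne : φ x ≠ 0 := fun h => hx (by simp [h])
    simpa using hmem x hxne
  have hB : ∀ n, boltzmannSchedule g n φ = F (u n) := by
    intro n
    funext x
    simp only [boltzmannSchedule, hF]
    rw [hfinsumZ]
  have hdist : ∀ t s, nfdDist (F t) (F s) = ∑ x ∈ S, |F t x - F s x| := by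
    intro t s
    apply finsum_eq_finset_sum_of_support_subset
    intro x hx
    simp only [Function.mem_support] at hx
    have hxne : φ x ≠ 0 := by
      intro h
      apply hx
      simp [hF, h]
    simpa using hmem x hxne
  set D : ℝ × ℝ → ℝ := fun p => ∑ x ∈ S, |F p.1 x - F p.2 x| with hD
  have hZcont : Continuous Z := by
    apply continuous_finset_sum
    intro x _
    exact continuous_const.mul (Real.continuous_exp.comp (continuous_const.mul continuous_id))
  have hFcont : ∀ x, Continuous fun t => F t x := by
    intro x
    apply Continuous.div
    · exact continuous_const.mul (Real.continuous_exp.comp (continuous_const.mul continuous_id))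
    · exact hZcont
    · exact fun t => (hZpos t).ne'
  have hDcont : Continuous D := by
    apply continuous_finset_sum
    intro x _
    exact (((hFcont x).comp continuous_fst).sub ((hFcont x).comp continuous_snd)).abs
  -- the partial sums converge
  have hcs : CauchySeq u := by
    rw [Metric.cauchySeq_iff]
    intro δ hδ
    obtain ⟨N, hN⟩ := hCauchy δ hδ
    exact ⟨N, fun m hm n hn => by simpa [Real.dist_eq] using hN m n hm hn⟩
  obtain ⟨L, hL⟩ := cauchySeq_tendsto_of_complete hcs
  have hDLL : D (L, L) = 0 := by simp [hD]
  obtain ⟨δ, hδpos, hδ⟩ := Metric.continuousAt_iff.mp (hDcont.continuousAt (x := (L, L))) ε hε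
  obtain ⟨N, hN⟩ := (Metric.tendsto_atTop.mp hL) δ hδpos
  refine ⟨N, fun n m hn hm => ?_⟩
  have hlt : dist ((u n, u m) : ℝ × ℝ) (L, L) < δ := by
    rw [Prod.dist_eq]
    exact max_lt (hN n hn) (hN m hm)
  have := hδ hlt
  rw [hDLL, Real.dist_eq, sub_zero] at this
  have hDnn : 0 ≤ D (u n, u m) :=
    Finset.sum_nonneg fun x _ => abs_nonneg _
  rw [hB n, hB m, hdist]
  calc ∑ x ∈ S, |F (u n) x - F (u m) x| = D (u n, u m) := rfl
    _ ≤ |D (u n, u m)| := le_abs_self _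
    _ < ε := this
end

section
/- For the Cauchy annealing schedule g_k = g₀ / k^α with any constant g₀ ≥ 0 and any α > 1, the corresponding Boltzmann selection schedule {Γ_(n)} satisfies the Cauchy criteria: for every NFD φ with E_φ ⊂ [0,∞), the sequence {Γ_(n)φ}_n is a Cauchy sequence with respect to the metric d. -/
/-- For the Cauchy annealing schedule `g_k = g₀ / k^α` with `g₀ ≥ 0` and `α > 1`,
the Boltzmann selection schedule satisfies the Cauchy criteria: for every NFD `φ`
the sequence `{Γ_(n)φ}` is Cauchy with respect to the metric `d`. -/
theorem cauchyAnnealing_boltzmannSchedule_cauchy (g₀ α : ℝ) (hg₀ : 0 ≤ g₀)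
    (hα : 1 < α) (φ : ℝ → ℝ) (hφ : IsNFD φ)
    (hnn : Function.support φ ⊆ Set.Ici (0 : ℝ)) :
    ∀ ε > (0 : ℝ), ∃ N : ℕ, ∀ n m : ℕ, N ≤ n → N ≤ m →
      nfdDist (boltzmannSchedule (fun k => g₀ / (k : ℝ) ^ α) n φ)
        (boltzmannSchedule (fun k => g₀ / (k : ℝ) ^ α) m φ) < ε := by
  classical
  intro ε hε
  set g : ℕ → ℝ := fun k => g₀ / (k : ℝ) ^ α with hg
  set s : Finset ℝ := hφ.finite_support.toFinset with hs
  have hsupp : ∀ x, x ∈ s ↔ φ x ≠ 0 := by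
    intro x; simp [hs, Set.Finite.mem_toFinset, Function.mem_support]
  have hφ0 : ∀ x, 0 ≤ φ x := fun x => (hφ.mem_Icc x).1
  have hne : s.Nonempty := by
    by_contra h
    have h0 : ∀ x, φ x = 0 := by
      intro x
      by_contra hx
      exact h ⟨x, (hsupp x).mpr hx⟩
    have := hφ.sum_eq_one
    simp [h0] at this
  set β : ℕ → ℝ := fun n => ∑ k ∈ Finset.Icc 1 n, g k with hβdef
  set D : ℝ → ℝ := fun b => ∑ y ∈ s, φ y * Real.exp (y * b) with hD
  set F : ℝ → ℝ → ℝ := fun b x => φ x * Real.exp (x * b) / D b with hF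
  have hDpos : ∀ b, 0 < D b := by
    intro b
    apply Finset.sum_pos'
    · intro y _; exact mul_nonneg (hφ0 y) (Real.exp_pos _).le
    · obtain ⟨y, hy⟩ := hne
      exact ⟨y, hy, mul_pos (lt_of_le_of_ne (hφ0 y) (Ne.symm ((hsupp y).mp hy))) (Real.exp_pos _)⟩
  have hΓ : ∀ n x, boltzmannSchedule g n φ x = F (β n) x := by
    intro n x
    have : (∑ᶠ y, φ y * Real.exp (y * β n)) = D (β n) := by
      apply finsum_eq_finset_sum_of_support_subset
      intro y hy
      have : φ y ≠ 0 := by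
        intro h0
        simp [Function.mem_support, h0] at hy
      simpa [hsupp] using this
    simp only [boltzmannSchedule, hF, hβdef] at *
    rw [this]
  -- convergence of β
  have hsum : Summable g := by
    have h1 : Summable fun k : ℕ => 1 / (k : ℝ) ^ α :=
      Real.summable_one_div_nat_rpow.mpr hα
    have := h1.mul_left g₀
    convert this using 2 with k
    show g₀ / (k : ℝ) ^ α = g₀ * (1 / (k : ℝ) ^ α)
    ring
    rfl
  have hg0 : g 0 = 0 := by
    simp [hg, Real.zero_rpow (by linarith : α ≠ 0)]
  have hβeq : ∀ n, β n = ∑ k ∈ Finset.range (n + 1), g k := by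
    intro n
    induction n with
    | zero => simp [hβdef, hg0]
    | succ n ih =>
      show ∑ k ∈ Finset.Icc 1 (n + 1), g k = _
      rw [Finset.sum_Icc_succ_top (by omega : 1 ≤ n + 1), Finset.sum_range_succ, ← ih]
  have hβl : Filter.Tendsto β Filter.atTop (nhds (∑' k, g k)) := by
    have h1 := hsum.hasSum.tendsto_sum_nat
    have h2 : Filter.Tendsto (fun n : ℕ => n + 1) Filter.atTop Filter.atTop :=
      Filter.tendsto_add_atTop_nat 1
    have h3 := h1.comp h2
    have heq : β = (fun n => ∑ i ∈ Finset.range n, g i) ∘ fun n => n + 1 := by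
      funext n; simp [Function.comp, hβeq n]
    rw [heq]; exact h3
  have hcont : ∀ x, Continuous fun b => F b x := by
    intro x
    simp only [hF, hD]
    apply Continuous.div
    · exact (continuous_const.mul ((continuous_mul_left x).rexp))
    · exact continuous_finset_sum _ fun y _ =>
        continuous_const.mul ((continuous_mul_left y).rexp)
    · intro b; exact ne_of_gt (hDpos b)
  have hδ : 0 < ε / (s.card + 1) := by positivity
  have hconv : ∀ x : ℝ, ∃ N, ∀ n ≥ N, ∀ m ≥ N,
      |F (β n) x - F (β m) x| < ε / (s.card + 1) := by
    intro x
    have hc : CauchySeq fun n => F (β n) x :=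
      (((hcont x).tendsto _).comp hβl).cauchySeq
    rw [Metric.cauchySeq_iff] at hc
    obtain ⟨N, hN⟩ := hc _ hδ
    exact ⟨N, fun n hn m hm => by
      have := hN n hn m hm
      rwa [Real.dist_eq] at this⟩
  choose Nf hNf using hconv
  refine ⟨s.sup Nf, fun n m hn hm => ?_⟩
  have hdist : nfdDist (boltzmannSchedule g n φ) (boltzmannSchedule g m φ)
      = ∑ x ∈ s, |F (β n) x - F (β m) x| := by
    rw [nfdDist]
    simp only [hΓ]
    apply finsum_eq_finset_sum_of_support_subset
    intro x hx
    rw [Function.mem_support] at hx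
    by_contra hxs
    have hφx : φ x = 0 := by
      by_contra h; exact hxs ((hsupp x).mpr h)
    simp [hF, hφx] at hx
  rw [hdist]
  have hlt : ∀ x ∈ s, |F (β n) x - F (β m) x| < ε / (s.card + 1) := by
    intro x hx
    exact hNf x n (le_trans (Finset.le_sup hx) hn) m (le_trans (Finset.le_sup hx) hm)
  calc ∑ x ∈ s, |F (β n) x - F (β m) x|
      < ∑ _x ∈ s, ε / (s.card + 1) := Finset.sum_lt_sum_of_nonempty hne hlt
    _ = s.card * (ε / (s.card + 1)) := by rw [Finset.sum_const, nsmul_eq_mul]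
    _ < ε := by
        rw [mul_div_assoc']
        rw [div_lt_iff₀ (by positivity)]
        have : (0:ℝ) < ε := hε
        nlinarith [Nat.cast_nonneg (α := ℝ) s.card]
end
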